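/- arXiv:1508.05992 — 3 statements merged into one kernel-verified Lean document; each statement's English description precedes it below -/
import Mathlib

section
/- The triple integral ∫_{-π}^{π} ∫_{-π}^{π} ∫_0^2 I(r,ψ,φ) · r dr dψ dφ equals 4, where I(r,ψ,φ) is the indicator that the unit segment S from the origin making angle ψ (counterclockwise) with the segment Q from the origin to the point at distance r, and the unit segment T from that point making angle φ (clockwise) with Q, intersect at an interior point of each. -/
open Real Set MeasureTheory intervalIntegral

/-- The unit segment `S` from the origin making angle `ψ` with the positive x-axis. -/
noncomputable def segS (ψ : ℝ) : Set (ℝ × ℝ) :=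
  segment ℝ (0, 0) (Real.cos ψ, Real.sin ψ)

/-- The unit segment `T` from `(r,0)` making angle `φ` measured clockwise from the
segment `Q` from the origin to `(r,0)`, i.e. in direction angle `π - φ`. -/
noncomputable def segT (r φ : ℝ) : Set (ℝ × ℝ) :=
  segment ℝ (r, 0) (r + Real.cos (Real.pi - φ), Real.sin (Real.pi - φ))

open Classical in
/-- Indicator that `S` and `T` intersect at a point interior to both segments. -/
noncomputable def I (r ψ φ : ℝ) : ℝ :=
  if ∃ p : ℝ × ℝ, p ∈ openSegment ℝ ((0 : ℝ), (0 : ℝ)) (Real.cos ψ, Real.sin ψ) ∧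
      p ∈ openSegment ℝ ((r : ℝ), (0 : ℝ)) (r + Real.cos (Real.pi - φ), Real.sin (Real.pi - φ))
  then 1 else 0


section Aux
open Filter Topology

lemma seg_char (r ψ φ : ℝ) (hD : Real.sin (ψ + φ) ≠ 0) :
    (∃ p : ℝ × ℝ, p ∈ openSegment ℝ ((0 : ℝ), (0 : ℝ)) (Real.cos ψ, Real.sin ψ) ∧
      p ∈ openSegment ℝ ((r : ℝ), (0 : ℝ)) (r + Real.cos (Real.pi - φ), Real.sin (Real.pi - φ))) ↔
    (r * Real.sin φ / Real.sin (ψ + φ) ∈ Ioo (0:ℝ) 1 ∧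
      r * Real.sin ψ / Real.sin (ψ + φ) ∈ Ioo (0:ℝ) 1) := by
  rw [Real.cos_pi_sub, Real.sin_pi_sub]
  constructor
  · rintro ⟨p, hS, hT⟩
    rw [openSegment_eq_image] at hS hT
    obtain ⟨t, ht, hpt⟩ := hS
    obtain ⟨s, hs, hps⟩ := hT
    have h1 : t * Real.cos ψ = p.1 := by
      have := congrArg Prod.fst hpt; simpa using this
    have h2 : t * Real.sin ψ = p.2 := by
      have := congrArg Prod.snd hpt; simpa using this
    have h3 : r - s * Real.cos φ = p.1 := by
      have := congrArg Prod.fst hps; simp at this; linarith [this]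
    have h4 : s * Real.sin φ = p.2 := by
      have := congrArg Prod.snd hps; simpa using this
    have hts : t * Real.sin (ψ + φ) = r * Real.sin φ := by
      rw [Real.sin_add]; linear_combination Real.cos φ * h2 - Real.cos φ * h4 + Real.sin φ * h1 - Real.sin φ * h3
    have hss : s * Real.sin (ψ + φ) = r * Real.sin ψ := by
      rw [Real.sin_add]; linear_combination Real.cos ψ * h4 - Real.cos ψ * h2 + Real.sin ψ * h1 - Real.sin ψ * h3
    have htv : r * Real.sin φ / Real.sin (ψ + φ) = t := by
      field_simp [← hts]
      linarith [hts]
    have hsv : r * Real.sin ψ / Real.sin (ψ + φ) = s := by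
      field_simp [← hss]
      linarith [hss]
    exact ⟨htv ▸ ht, hsv ▸ hs⟩
  · rintro ⟨ht, hs⟩
    set t := r * Real.sin φ / Real.sin (ψ + φ) with htd
    set s := r * Real.sin ψ / Real.sin (ψ + φ) with hsd
    refine ⟨(t * Real.cos ψ, t * Real.sin ψ), ?_, ?_⟩
    · rw [openSegment_eq_image]
      exact ⟨t, ht, by simp⟩
    · rw [openSegment_eq_image]
      refine ⟨s, hs, ?_⟩
      have e1 : r - s * Real.cos φ = t * Real.cos ψ := by
        rw [htd, hsd]
        field_simp
        rw [Real.sin_add]; ring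
      have e2 : s * Real.sin φ = t * Real.sin ψ := by
        rw [htd, hsd]; field_simp
      simp only [Prod.mk.injEq, Prod.smul_mk, Prod.mk_add_mk, smul_eq_mul]
      constructor <;> nlinarith [e1, e2]

noncomputable def g (ψ φ : ℝ) : ℝ :=
  if 0 < Real.sin ψ ∧ 0 < Real.sin (ψ + φ) then
    Real.sin (ψ + φ) ^ 2 / (2 * max (Real.sin ψ) (Real.sin φ) ^ 2) else 0

lemma inner_eq (ψ φ : ℝ) (hφ : 0 < Real.sin φ) (hψ : Real.sin ψ ≠ 0)
    (hD : Real.sin (ψ + φ) ≠ 0) :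
    (∫ r in (0:ℝ)..2, I r ψ φ * r) = g ψ φ := by
  by_cases hc : 0 < Real.sin ψ ∧ 0 < Real.sin (ψ + φ)
  · obtain ⟨h1, h2⟩ := hc
    have hm0 : 0 < max (Real.sin ψ) (Real.sin φ) := lt_of_lt_of_le hφ (le_max_right _ _)
    set m := max (Real.sin ψ) (Real.sin φ) with hm
    set R := Real.sin (ψ + φ) / m with hRdef
    have hR0 : 0 < R := div_pos h2 hm0
    have hR2 : R ≤ 2 := by
      rw [hRdef, div_le_iff₀ hm0, Real.sin_add]
      nlinarith [Real.cos_le_one ψ, Real.cos_le_one φ, le_max_left (Real.sin ψ) (Real.sin φ),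
        le_max_right (Real.sin ψ) (Real.sin φ)]
    have key : EqOn (fun r => I r ψ φ * r) (fun r => (Ioo (0:ℝ) R).indicator (fun x => x) r)
        (uIcc 0 2) := by
      intro r hr
      by_cases hrR : r ∈ Ioo 0 R
      · have hr0 : 0 < r := hrR.1
        have hrm : r * m < Real.sin (ψ + φ) := (lt_div_iff₀ hm0).mp hrR.2
        have hprop : r * Real.sin φ / Real.sin (ψ + φ) ∈ Ioo (0:ℝ) 1 ∧
            r * Real.sin ψ / Real.sin (ψ + φ) ∈ Ioo (0:ℝ) 1 := by
          refine ⟨⟨div_pos (mul_pos hr0 hφ) h2, ?_⟩, ⟨div_pos (mul_pos hr0 h1) h2, ?_⟩⟩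
          · rw [div_lt_one h2]
            nlinarith [le_max_right (Real.sin ψ) (Real.sin φ)]
          · rw [div_lt_one h2]
            nlinarith [le_max_left (Real.sin ψ) (Real.sin φ)]
        have hI : I r ψ φ = 1 := by
          rw [I, if_pos ((seg_char r ψ φ hD).mpr hprop)]
        simp [hI, indicator_of_mem hrR]
      · have hno : ¬ ∃ p : ℝ × ℝ, p ∈ openSegment ℝ ((0 : ℝ), (0 : ℝ)) (Real.cos ψ, Real.sin ψ) ∧
            p ∈ openSegment ℝ ((r : ℝ), (0 : ℝ))
              (r + Real.cos (Real.pi - φ), Real.sin (Real.pi - φ)) := by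
          intro hex
          obtain ⟨ht, hs⟩ := (seg_char r ψ φ hD).mp hex
          have hr0 : 0 ≤ r := by rcases hr with ⟨ha, _⟩; simpa using ha
          have hrpos : 0 < r := by
            rcases lt_or_eq_of_le hr0 with h | h
            · exact h
            · exfalso; have := ht.1; rw [← h] at this; simp at this
          apply hrR
          refine ⟨hrpos, ?_⟩
          rw [hRdef, lt_div_iff₀ hm0]
          have e1 : r * Real.sin φ < Real.sin (ψ + φ) := by
            have := ht.2; rwa [div_lt_one h2] at this
          have e2 : r * Real.sin ψ < Real.sin (ψ + φ) := by
            have := hs.2; rwa [div_lt_one h2] at this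
          rcases max_cases (Real.sin ψ) (Real.sin φ) with ⟨hmax, _⟩ | ⟨hmax, _⟩ <;>
            rw [hm, hmax] <;> linarith
        have hI : I r ψ φ = 0 := by rw [I, if_neg hno]
        simp [hI, indicator_of_notMem hrR]
    rw [intervalIntegral.integral_congr key]
    rw [intervalIntegral.integral_of_le (by norm_num : (0:ℝ) ≤ 2)]
    rw [MeasureTheory.integral_indicator measurableSet_Ioo]
    rw [Measure.restrict_restrict measurableSet_Ioo]
    have hsub : Ioo 0 R ∩ Ioc 0 2 = Ioo 0 R := by
      apply inter_eq_left.mpr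
      intro x hx
      exact ⟨hx.1, le_trans hx.2.le hR2⟩
    rw [hsub, ← MeasureTheory.integral_Ioc_eq_integral_Ioo,
      ← intervalIntegral.integral_of_le hR0.le]
    rw [g, if_pos ⟨h1, h2⟩, integral_id, hRdef]
    have : m ≠ 0 := ne_of_gt hm0
    field_simp
    ring
  · have key : EqOn (fun r => I r ψ φ * r) (fun _ => (0:ℝ)) (uIcc 0 2) := by
      intro r hr
      have hno : ¬ ∃ p : ℝ × ℝ, p ∈ openSegment ℝ ((0 : ℝ), (0 : ℝ)) (Real.cos ψ, Real.sin ψ) ∧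
          p ∈ openSegment ℝ ((r : ℝ), (0 : ℝ))
            (r + Real.cos (Real.pi - φ), Real.sin (Real.pi - φ)) := by
        intro hex
        obtain ⟨ht, hs⟩ := (seg_char r ψ φ hD).mp hex
        have hr0 : 0 ≤ r := by rcases hr with ⟨ha, _⟩; simpa using ha
        have hrpos : 0 < r := by
          rcases lt_or_eq_of_le hr0 with h | h
          · exact h
          · exfalso; have := ht.1; rw [← h] at this; simp at this
        have hDpos : 0 < Real.sin (ψ + φ) := by
          by_contra hneg
          push_neg at hneg
          have h1 := ht.1
          rcases lt_or_eq_of_le hneg with h | h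
          · have : r * Real.sin φ / Real.sin (ψ + φ) < 0 :=
              div_neg_of_pos_of_neg (mul_pos hrpos hφ) h
            linarith
          · rw [h] at h1; simp at h1
        have hsψ : 0 < Real.sin ψ := by
          have h1 := hs.1
          have hmul : 0 < r * Real.sin ψ := by
            by_contra hneg
            push_neg at hneg
            have : r * Real.sin ψ / Real.sin (ψ + φ) ≤ 0 :=
              div_nonpos_of_nonpos_of_nonneg hneg hDpos.le
            linarith
          nlinarith
        exact hc ⟨hsψ, hDpos⟩
      have hI : I r ψ φ = 0 := by rw [I, if_neg hno]
      simp [hI]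
    rw [intervalIntegral.integral_congr key, g, if_neg hc]
    simp

lemma cos_pi_add' (x : ℝ) : Real.cos (Real.pi + x) = -Real.cos x := by
  rw [Real.cos_add]; simp

lemma sin_pi_add' (x : ℝ) : Real.sin (Real.pi + x) = -Real.sin x := by
  rw [Real.sin_add]; simp

lemma refl_mem {x y p : ℝ × ℝ} (h : p ∈ openSegment ℝ x y) :
    (p.1, -p.2) ∈ openSegment ℝ (x.1, -x.2) (y.1, -y.2) := by
  rw [openSegment_eq_image] at h ⊢
  obtain ⟨t, ht, heq⟩ := h
  refine ⟨t, ht, ?_⟩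
  have h1 := congrArg Prod.fst heq
  have h2 := congrArg Prod.snd heq
  simp only [Prod.smul_mk, Prod.mk_add_mk, smul_eq_mul] at h1 h2 ⊢
  simp at h1 h2 ⊢
  refine ⟨h1, by linarith⟩

lemma I_neg (r ψ φ : ℝ) : I r (-ψ) (-φ) = I r ψ φ := by
  classical
  rw [I, I]
  refine if_congr ?_ rfl rfl
  constructor
  · rintro ⟨p, hS, hT⟩
    refine ⟨(p.1, -p.2), ?_, ?_⟩
    · have := refl_mem hS
      simpa [Real.cos_neg, Real.sin_neg] using this
    · have := refl_mem hT
      simpa [Real.cos_pi_sub, Real.sin_pi_sub, Real.cos_neg, Real.sin_neg, cos_pi_add', sin_pi_add'] using this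
  · rintro ⟨p, hS, hT⟩
    refine ⟨(p.1, -p.2), ?_, ?_⟩
    · have := refl_mem hS
      simpa [Real.cos_neg, Real.sin_neg] using this
    · have := refl_mem hT
      simpa [Real.cos_pi_sub, Real.sin_pi_sub, Real.cos_neg, Real.sin_neg, cos_pi_add', sin_pi_add'] using this

noncomputable def F (ψ φ : ℝ) : ℝ := ∫ r in (0:ℝ)..2, I r ψ φ * r

lemma F_neg (ψ φ : ℝ) : F (-ψ) (-φ) = F ψ φ := by
  unfold F
  refine intervalIntegral.integral_congr fun r _ => ?_
  rw [I_neg]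

noncomputable def hone (φ : ℝ) : ℝ :=
  (φ - Real.sin φ * Real.cos φ)/(4*Real.sin φ^2) + Real.sin (2*φ)/2
  + ((Real.pi - 2*φ)*Real.cos (2*φ) + Real.sin (2*φ))/2

noncomputable def htwo (φ : ℝ) : ℝ :=
  ((Real.pi - φ) + Real.sin φ * Real.cos φ)/(4*Real.sin φ^2)

noncomputable def htilde (φ : ℝ) : ℝ := if φ ≤ Real.pi/2 then hone φ else htwo φ

lemma ae_congr_finite {f g : ℝ → ℝ} {a b : ℝ} (s : Set ℝ) (hs : s.Finite)
    (h : ∀ x ∈ uIoc a b, x ∉ s → f x = g x) :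
    ∫ x in a..b, f x = ∫ x in a..b, g x := by
  apply intervalIntegral.integral_congr_ae
  have hns : volume s = 0 := hs.countable.measure_zero _
  filter_upwards [measure_eq_zero_iff_ae_notMem.mp hns] with x hx hxI
  exact h x hxI hx

lemma ii_congr {f g : ℝ → ℝ} {a b : ℝ} (h : EqOn f g (uIoc a b))
    (hg : IntervalIntegrable g volume a b) : IntervalIntegrable f volume a b := by
  rw [intervalIntegrable_iff] at hg ⊢
  exact hg.congr_fun (fun x hx => (h hx).symm) measurableSet_uIoc

lemma sin_mono {a b : ℝ} (ha : 0 ≤ a) (hab : a ≤ b) (hb : b ≤ Real.pi/2) :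
    Real.sin a ≤ Real.sin b := by
  rcases eq_or_lt_of_le hab with rfl | h
  · exact le_refl _
  · have hpi := Real.pi_pos
    exact (Real.strictMonoOn_sin ⟨by linarith, by linarith⟩ ⟨by linarith, hb⟩ h).le

-- integral of sin^2(ψ+φ) type
lemma ftc_q2 (φ a b : ℝ) (hs : Real.sin φ ≠ 0) :
    ∫ ψ in a..b, Real.sin (ψ+φ)^2/(2*Real.sin φ^2)
      = ((b/2 - Real.sin (2*(b+φ))/4) - (a/2 - Real.sin (2*(a+φ))/4))/(2*Real.sin φ^2) := by
  have hcont : Continuous (fun ψ : ℝ => Real.sin (ψ+φ)^2/(2*Real.sin φ^2)) := by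
    apply Continuous.div_const
    exact (Real.continuous_sin.comp (continuous_id.add continuous_const)).pow 2
  have hderiv : ∀ x ∈ uIcc a b,
      HasDerivAt (fun ψ => (ψ/2 - Real.sin (2*(ψ+φ))/4)/(2*Real.sin φ^2))
        (Real.sin (x+φ)^2/(2*Real.sin φ^2)) x := by
    intro x _
    have h1 : HasDerivAt (fun ψ : ℝ => 2*(ψ+φ)) 2 x := by
      simpa using ((hasDerivAt_id x).add_const φ).const_mul 2
    have h2 : HasDerivAt (fun ψ : ℝ => Real.sin (2*(ψ+φ))) (Real.cos (2*(x+φ))*2) x :=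
      (Real.hasDerivAt_sin _).comp x h1
    have h3 := (((hasDerivAt_id x).div_const 2).sub (h2.div_const 4)).div_const
      (2*Real.sin φ^2)
    refine h3.congr_deriv ?_
    have hc := Real.cos_two_mul (x+φ)
    have hp := Real.sin_sq_add_cos_sq (x+φ)
    have : Real.sin (x+φ)^2 = 1/2 - Real.cos (2*(x+φ))*2/4 := by linarith
    rw [this]
  rw [intervalIntegral.integral_eq_sub_of_hasDerivAt hderiv (hcont.intervalIntegrable a b)]
  ring

lemma middle_eq_one (φ : ℝ) (hφ0 : 0 < φ) (hφ2 : φ ≤ Real.pi/2) :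
    (∫ ψ in (-Real.pi)..Real.pi, g ψ φ) = hone φ := by
  have hpi := Real.pi_pos
  have hφπ : φ < Real.pi := by linarith
  have hsφ : 0 < Real.sin φ := Real.sin_pos_of_pos_of_lt_pi hφ0 hφπ
  have hπφ : φ ≤ Real.pi - φ := by linarith
  -- pointwise facts
  have hg1 : ∀ ψ ∈ Icc (-Real.pi) (0:ℝ), g ψ φ = 0 := by
    intro ψ hψ
    rw [g, if_neg]
    rintro ⟨h1, -⟩
    have : Real.sin ψ ≤ 0 := Real.sin_nonpos_of_nonpos_of_neg_pi_le hψ.2 hψ.1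
    linarith
  have hg4 : ∀ ψ ∈ Icc (Real.pi - φ) Real.pi, g ψ φ = 0 := by
    intro ψ hψ
    rw [g, if_neg]
    rintro ⟨-, h2⟩
    have hnn : 0 ≤ Real.sin (ψ + φ - Real.pi) :=
      Real.sin_nonneg_of_nonneg_of_le_pi (by linarith [hψ.1]) (by linarith [hψ.2])
    rw [Real.sin_sub_pi] at hnn
    linarith
  have hg2 : ∀ ψ ∈ Ioc (0:ℝ) φ, g ψ φ = Real.sin (ψ+φ)^2/(2*Real.sin φ^2) := by
    intro ψ hψ
    have hψπ : ψ < Real.pi := by linarith [hψ.2]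
    have hsψ : 0 < Real.sin ψ := Real.sin_pos_of_pos_of_lt_pi hψ.1 hψπ
    have hle : Real.sin ψ ≤ Real.sin φ := sin_mono hψ.1.le hψ.2 hφ2
    have hmax : max (Real.sin ψ) (Real.sin φ) = Real.sin φ := max_eq_right hle
    by_cases hD : 0 < Real.sin (ψ + φ)
    · rw [g, if_pos ⟨hsψ, hD⟩, hmax]
    · have h0 : 0 ≤ Real.sin (ψ + φ) :=
        Real.sin_nonneg_of_nonneg_of_le_pi (by linarith [hψ.1.le]) (by linarith [hψ.2])
      have : Real.sin (ψ + φ) = 0 := le_antisymm (not_lt.mp hD) h0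
      rw [g, if_neg (fun hc => hD hc.2), this]
      simp
  have hsge : ∀ ψ ∈ Icc φ (Real.pi - φ), Real.sin φ ≤ Real.sin ψ := by
    intro ψ hψ
    by_cases hc : ψ ≤ Real.pi/2
    · exact sin_mono hφ0.le hψ.1 hc
    · rw [← Real.sin_pi_sub ψ]
      exact sin_mono hφ0.le (by linarith [hψ.2]) (by linarith [not_le.mp hc])
  have hg3 : ∀ ψ ∈ Icc φ (Real.pi - φ), g ψ φ = Real.sin (ψ+φ)^2/(2*Real.sin ψ^2) := by
    intro ψ hψ
    have hsψ : 0 < Real.sin ψ := lt_of_lt_of_le hsφ (hsge ψ hψ)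
    have hmax : max (Real.sin ψ) (Real.sin φ) = Real.sin ψ := max_eq_left (hsge ψ hψ)
    by_cases hD : 0 < Real.sin (ψ + φ)
    · rw [g, if_pos ⟨hsψ, hD⟩, hmax]
    · have h0 : 0 ≤ Real.sin (ψ + φ) :=
        Real.sin_nonneg_of_nonneg_of_le_pi (by linarith [hψ.1]) (by linarith [hψ.2])
      have : Real.sin (ψ + φ) = 0 := le_antisymm (not_lt.mp hD) h0
      rw [g, if_neg (fun hc => hD hc.2), this]
      simp
  -- continuity facts
  have hcont2 : Continuous (fun ψ : ℝ => Real.sin (ψ+φ)^2/(2*Real.sin φ^2)) := by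
    apply Continuous.div_const
    exact (Real.continuous_sin.comp (continuous_id.add continuous_const)).pow 2
  have hcont3 : ContinuousOn (fun ψ : ℝ => Real.sin (ψ+φ)^2/(2*Real.sin ψ^2))
      (Icc φ (Real.pi - φ)) := by
    apply ContinuousOn.div
    · exact ((Real.continuous_sin.comp (continuous_id.add continuous_const)).pow 2).continuousOn
    · exact (continuous_const.mul (Real.continuous_sin.pow 2)).continuousOn
    · intro x hx
      have := lt_of_lt_of_le hsφ (hsge x hx)
      positivity
  -- integrability of g on pieces
  have i1 : IntervalIntegrable (fun ψ => g ψ φ) volume (-Real.pi) 0 := by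
    apply ii_congr (g := fun _ => (0:ℝ)) _ intervalIntegrable_const
    intro x hx
    rw [uIoc_of_le (by linarith : -Real.pi ≤ (0:ℝ))] at hx
    exact hg1 x ⟨hx.1.le, hx.2⟩
  have i2 : IntervalIntegrable (fun ψ => g ψ φ) volume 0 φ := by
    apply ii_congr (g := fun ψ => Real.sin (ψ+φ)^2/(2*Real.sin φ^2)) _
      (hcont2.intervalIntegrable _ _)
    intro x hx
    rw [uIoc_of_le hφ0.le] at hx
    exact hg2 x hx
  have i3 : IntervalIntegrable (fun ψ => g ψ φ) volume φ (Real.pi - φ) := by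
    apply ii_congr (g := fun ψ => Real.sin (ψ+φ)^2/(2*Real.sin ψ^2)) _
      ((hcont3.mono (by rw [uIcc_of_le hπφ])).intervalIntegrable)
    intro x hx
    rw [uIoc_of_le hπφ] at hx
    exact hg3 x ⟨hx.1.le, hx.2⟩
  have i4 : IntervalIntegrable (fun ψ => g ψ φ) volume (Real.pi - φ) Real.pi := by
    apply ii_congr (g := fun _ => (0:ℝ)) _ intervalIntegrable_const
    intro x hx
    rw [uIoc_of_le (by linarith : Real.pi - φ ≤ Real.pi)] at hx
    exact hg4 x ⟨hx.1.le, hx.2⟩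
  -- split
  have hsplit : (∫ ψ in (-Real.pi)..Real.pi, g ψ φ)
      = (∫ ψ in (-Real.pi)..(0:ℝ), g ψ φ) + (∫ ψ in (0:ℝ)..φ, g ψ φ)
        + (∫ ψ in φ..(Real.pi - φ), g ψ φ) + (∫ ψ in (Real.pi - φ)..Real.pi, g ψ φ) := by
    rw [intervalIntegral.integral_add_adjacent_intervals i1 i2,
      intervalIntegral.integral_add_adjacent_intervals (i1.trans i2) i3,
      intervalIntegral.integral_add_adjacent_intervals ((i1.trans i2).trans i3) i4]
  rw [hsplit]
  -- evaluate pieces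
  have v1 : (∫ ψ in (-Real.pi)..(0:ℝ), g ψ φ) = 0 := by
    rw [intervalIntegral.integral_congr (g := fun _ => (0:ℝ))]
    · simp
    · intro x hx
      rw [uIcc_of_le (by linarith : -Real.pi ≤ (0:ℝ))] at hx
      exact hg1 x hx
  have v4 : (∫ ψ in (Real.pi - φ)..Real.pi, g ψ φ) = 0 := by
    rw [intervalIntegral.integral_congr (g := fun _ => (0:ℝ))]
    · simp
    · intro x hx
      rw [uIcc_of_le (by linarith : Real.pi - φ ≤ Real.pi)] at hx
      exact hg4 x hx
  have v2 : (∫ ψ in (0:ℝ)..φ, g ψ φ)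
      = ((φ/2 - Real.sin (2*(φ+φ))/4) - (0/2 - Real.sin (2*(0+φ))/4))/(2*Real.sin φ^2) := by
    rw [ae_congr_finite ({0} : Set ℝ) (finite_singleton 0)
      (g := fun ψ => Real.sin (ψ+φ)^2/(2*Real.sin φ^2))]
    · exact ftc_q2 φ 0 φ hsφ.ne'
    · intro x hx hxs
      rw [uIoc_of_le hφ0.le] at hx
      exact hg2 x hx
  have v3 : (∫ ψ in φ..(Real.pi - φ), g ψ φ)
      = ((Real.pi - 2*φ)*(Real.cos φ^2 - Real.sin φ^2) + 2*Real.sin φ*Real.cos φ)/2 := by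
    rw [intervalIntegral.integral_congr (g := fun ψ => Real.sin (ψ+φ)^2/(2*Real.sin ψ^2))
      (fun x hx => hg3 x (by rwa [uIcc_of_le hπφ] at hx))]
    set G3 : ℝ → ℝ := fun ψ =>
      (Real.cos φ^2*ψ + 2*Real.sin φ*Real.cos φ*Real.log (Real.sin ψ)
        - Real.sin φ^2*(Real.cos ψ/Real.sin ψ + ψ))/2 with hG3
    have hderiv : ∀ x ∈ uIcc φ (Real.pi - φ),
        HasDerivAt G3 (Real.sin (x+φ)^2/(2*Real.sin x^2)) x := by
      intro x hx
      rw [uIcc_of_le hπφ] at hx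
      have hsx : 0 < Real.sin x := lt_of_lt_of_le hsφ (hsge x hx)
      have c1 : HasDerivAt (fun ψ : ℝ => Real.cos φ^2*ψ) (Real.cos φ^2) x := by
        simpa using (hasDerivAt_id x).const_mul (Real.cos φ^2)
      have c2 : HasDerivAt (fun ψ => Real.log (Real.sin ψ)) (Real.cos x/Real.sin x) x :=
        (Real.hasDerivAt_sin x).log hsx.ne'
      have c3 : HasDerivAt (fun ψ => Real.cos ψ/Real.sin ψ)
          ((-Real.sin x*Real.sin x - Real.cos x*Real.cos x)/Real.sin x^2) x :=
        (Real.hasDerivAt_cos x).div (Real.hasDerivAt_sin x) hsx.ne'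
      have hass := ((c1.add (c2.const_mul (2*Real.sin φ*Real.cos φ))).sub
        ((c3.add (hasDerivAt_id x)).const_mul (Real.sin φ^2))).div_const 2
      refine hass.congr_deriv ?_
      rw [Real.sin_add]
      field_simp
      ring_nf
    rw [intervalIntegral.integral_eq_sub_of_hasDerivAt hderiv
      ((hcont3.mono (by rw [uIcc_of_le hπφ])).intervalIntegrable)]
    rw [hG3]
    simp only [Real.sin_pi_sub, Real.cos_pi_sub]
    field_simp
    ring
  rw [v1, v2, v3, v4, hone]
  have h4φ : (2*(φ+φ)) = (2*φ) + (2*φ) := by ring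
  have h0φ : (2*(0+φ)) = 2*φ := by ring
  rw [h4φ, h0φ, Real.sin_add, Real.sin_two_mul, Real.cos_two_mul]
  field_simp
  linear_combination (-16*Real.sin φ*Real.cos φ
    - 8*Real.sin φ^2*(Real.pi - 2*φ)) * Real.sin_sq_add_cos_sq φ

lemma middle_eq_two (φ : ℝ) (hφ2 : Real.pi/2 < φ) (hφπ : φ < Real.pi) :
    (∫ ψ in (-Real.pi)..Real.pi, g ψ φ) = htwo φ := by
  have hpi := Real.pi_pos
  have hφ0 : 0 < φ := by linarith
  have hsφ : 0 < Real.sin φ := Real.sin_pos_of_pos_of_lt_pi hφ0 hφπ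
  have hπφ : Real.pi - φ ≤ Real.pi/2 := by linarith
  have hπφ0 : 0 ≤ Real.pi - φ := by linarith
  have hg1 : ∀ ψ ∈ Icc (-Real.pi) (0:ℝ), g ψ φ = 0 := by
    intro ψ hψ
    rw [g, if_neg]
    rintro ⟨h1, -⟩
    have : Real.sin ψ ≤ 0 := Real.sin_nonpos_of_nonpos_of_neg_pi_le hψ.2 hψ.1
    linarith
  have hg4 : ∀ ψ ∈ Icc (Real.pi - φ) Real.pi, g ψ φ = 0 := by
    intro ψ hψ
    rw [g, if_neg]
    rintro ⟨-, h2⟩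
    have hnn : 0 ≤ Real.sin (ψ + φ - Real.pi) :=
      Real.sin_nonneg_of_nonneg_of_le_pi (by linarith [hψ.1]) (by linarith [hψ.2])
    rw [Real.sin_sub_pi] at hnn
    linarith
  have hg2 : ∀ ψ ∈ Ioc (0:ℝ) (Real.pi - φ), g ψ φ = Real.sin (ψ+φ)^2/(2*Real.sin φ^2) := by
    intro ψ hψ
    have hψπ : ψ < Real.pi := by linarith [hψ.2]
    have hsψ : 0 < Real.sin ψ := Real.sin_pos_of_pos_of_lt_pi hψ.1 hψπ
    have hle : Real.sin ψ ≤ Real.sin φ := by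
      rw [← Real.sin_pi_sub φ]
      exact sin_mono hψ.1.le (by linarith [hψ.2]) (by linarith)
    have hmax : max (Real.sin ψ) (Real.sin φ) = Real.sin φ := max_eq_right hle
    by_cases hD : 0 < Real.sin (ψ + φ)
    · rw [g, if_pos ⟨hsψ, hD⟩, hmax]
    · have h0 : 0 ≤ Real.sin (ψ + φ) :=
        Real.sin_nonneg_of_nonneg_of_le_pi (by linarith [hψ.1.le]) (by linarith [hψ.2])
      have : Real.sin (ψ + φ) = 0 := le_antisymm (not_lt.mp hD) h0
      rw [g, if_neg (fun hc => hD hc.2), this]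
      simp
  have hcont2 : Continuous (fun ψ : ℝ => Real.sin (ψ+φ)^2/(2*Real.sin φ^2)) := by
    apply Continuous.div_const
    exact (Real.continuous_sin.comp (continuous_id.add continuous_const)).pow 2
  have i1 : IntervalIntegrable (fun ψ => g ψ φ) volume (-Real.pi) 0 := by
    apply ii_congr (g := fun _ => (0:ℝ)) _ intervalIntegrable_const
    intro x hx
    rw [uIoc_of_le (by linarith : -Real.pi ≤ (0:ℝ))] at hx
    exact hg1 x ⟨hx.1.le, hx.2⟩
  have i2 : IntervalIntegrable (fun ψ => g ψ φ) volume 0 (Real.pi - φ) := by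
    apply ii_congr (g := fun ψ => Real.sin (ψ+φ)^2/(2*Real.sin φ^2)) _
      (hcont2.intervalIntegrable _ _)
    intro x hx
    rw [uIoc_of_le hπφ0] at hx
    exact hg2 x hx
  have i4 : IntervalIntegrable (fun ψ => g ψ φ) volume (Real.pi - φ) Real.pi := by
    apply ii_congr (g := fun _ => (0:ℝ)) _ intervalIntegrable_const
    intro x hx
    rw [uIoc_of_le (by linarith : Real.pi - φ ≤ Real.pi)] at hx
    exact hg4 x ⟨hx.1.le, hx.2⟩
  have hsplit : (∫ ψ in (-Real.pi)..Real.pi, g ψ φ)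
      = (∫ ψ in (-Real.pi)..(0:ℝ), g ψ φ) + (∫ ψ in (0:ℝ)..(Real.pi - φ), g ψ φ)
        + (∫ ψ in (Real.pi - φ)..Real.pi, g ψ φ) := by
    rw [intervalIntegral.integral_add_adjacent_intervals i1 i2,
      intervalIntegral.integral_add_adjacent_intervals (i1.trans i2) i4]
  rw [hsplit]
  have v1 : (∫ ψ in (-Real.pi)..(0:ℝ), g ψ φ) = 0 := by
    rw [intervalIntegral.integral_congr (g := fun _ => (0:ℝ))]
    · simp
    · intro x hx
      rw [uIcc_of_le (by linarith : -Real.pi ≤ (0:ℝ))] at hx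
      exact hg1 x hx
  have v4 : (∫ ψ in (Real.pi - φ)..Real.pi, g ψ φ) = 0 := by
    rw [intervalIntegral.integral_congr (g := fun _ => (0:ℝ))]
    · simp
    · intro x hx
      rw [uIcc_of_le (by linarith : Real.pi - φ ≤ Real.pi)] at hx
      exact hg4 x hx
  have v2 : (∫ ψ in (0:ℝ)..(Real.pi - φ), g ψ φ)
      = (((Real.pi - φ)/2 - Real.sin (2*((Real.pi - φ)+φ))/4)
          - (0/2 - Real.sin (2*(0+φ))/4))/(2*Real.sin φ^2) := by
    rw [ae_congr_finite ({0} : Set ℝ) (finite_singleton 0)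
      (g := fun ψ => Real.sin (ψ+φ)^2/(2*Real.sin φ^2))]
    · exact ftc_q2 φ 0 (Real.pi - φ) hsφ.ne'
    · intro x hx hxs
      rw [uIoc_of_le hπφ0] at hx
      exact hg2 x hx
  rw [v1, v2, v4, htwo]
  have e1 : (2*((Real.pi - φ)+φ)) = 2*Real.pi := by ring
  have e2 : (2*(0+φ)) = 2*φ := by ring
  rw [e1, e2, Real.sin_two_pi, Real.sin_two_mul]
  field_simp
  ring

lemma middle_eq (φ : ℝ) (hφ0 : 0 < φ) (hφπ : φ < Real.pi) :
    (∫ ψ in (-Real.pi)..Real.pi, F ψ φ) = htilde φ := by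
  have hpi := Real.pi_pos
  have hsφ : 0 < Real.sin φ := Real.sin_pos_of_pos_of_lt_pi hφ0 hφπ
  have step1 : (∫ ψ in (-Real.pi)..Real.pi, F ψ φ) = ∫ ψ in (-Real.pi)..Real.pi, g ψ φ := by
    apply ae_congr_finite ({0, Real.pi, -φ, Real.pi - φ} : Set ℝ)
      ((Set.finite_singleton _).insert _ |>.insert _ |>.insert _)
    intro ψ hψI hψs
    rw [uIoc_of_le (by linarith : -Real.pi ≤ Real.pi)] at hψI
    simp only [mem_insert_iff, mem_singleton_iff, not_or] at hψs
    obtain ⟨hs0, hsπ, hsφ', hsπφ⟩ := hψs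
    have hψlt : ψ < Real.pi := lt_of_le_of_ne hψI.2 hsπ
    have hsψ : Real.sin ψ ≠ 0 := fun h =>
      hs0 ((Real.sin_eq_zero_iff_of_lt_of_lt hψI.1 hψlt).mp h)
    have hsD : Real.sin (ψ + φ) ≠ 0 := by
      intro hD
      obtain ⟨n, hn⟩ := Real.sin_eq_zero_iff.mp hD
      have hb1 : -Real.pi < (n:ℝ) * Real.pi := by rw [hn]; linarith [hψI.1]
      have hb2 : (n:ℝ) * Real.pi < 2 * Real.pi := by rw [hn]; linarith [hψI.2]
      have hn1 : (-1 : ℝ) < (n:ℝ) := by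
        by_contra hc
        push_neg at hc
        nlinarith
      have hn2 : (n:ℝ) < 2 := by
        by_contra hc
        push_neg at hc
        nlinarith
      have hn1' : (-1 : ℤ) < n := by exact_mod_cast hn1
      have hn2' : (n : ℤ) < 2 := by exact_mod_cast hn2
      interval_cases n
      · simp at hn; apply hsφ'; linarith
      · apply hsπφ; push_cast at hn; linarith
    exact inner_eq ψ φ hsφ hsψ hsD
  rw [step1, htilde]
  by_cases hc : φ ≤ Real.pi/2
  · rw [if_pos hc]; exact middle_eq_one φ hφ0 hc
  · rw [if_neg hc]; exact middle_eq_two φ (not_le.mp hc) hφπ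

lemma T1 : Tendsto (fun x : ℝ => x * Real.cos x / Real.sin x) (𝓝[≠] (0:ℝ)) (𝓝 1) := by
  have h := Real.hasDerivAt_sin 0
  rw [hasDerivAt_iff_tendsto_slope] at h
  simp only [slope_fun_def, Real.sin_zero, Real.cos_zero, sub_zero, vsub_eq_sub, smul_eq_mul] at h
  have hinv := h.inv₀ (one_ne_zero)
  rw [inv_one] at hinv
  have hcos : Tendsto (fun x : ℝ => Real.cos x) (𝓝[≠] (0:ℝ)) (𝓝 1) := by
    have := Real.continuous_cos.tendsto 0
    rw [Real.cos_zero] at this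
    exact this.mono_left nhdsWithin_le_nhds
  have := hinv.mul hcos
  rw [mul_one] at this
  apply this.congr
  intro x
  rw [mul_inv, inv_inv, div_eq_mul_inv]
  ring

lemma T2 : Tendsto (fun x : ℝ => (x - Real.sin x * Real.cos x)/(4 * Real.sin x^2))
    (𝓝[>] (0:ℝ)) (𝓝 0) := by
  have hmem : Ioo (0:ℝ) (1/2) ∈ 𝓝[>] (0:ℝ) :=
    Ioo_mem_nhdsGT_of_mem (by norm_num : (0:ℝ) ∈ Ico (0:ℝ) (1/2))
  apply squeeze_zero' (g := fun x : ℝ => x)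
  · filter_upwards [hmem] with x hx
    have hx0 : 0 < x := hx.1
    have hx2 : x < 1/2 := hx.2
    have hs : x - x^3/4 < Real.sin x := by
      have := Real.sin_gt_sub_cube hx0; nlinarith [pow_pos hx0 3]
    have hsc : Real.sin x * Real.cos x = Real.sin (2*x) / 2 := by
      rw [Real.sin_two_mul]; ring
    have hle : Real.sin (2*x) ≤ 2*x := Real.sin_le (by linarith)
    rw [hsc]
    apply div_nonneg _ (by positivity)
    linarith
  · filter_upwards [hmem] with x hx
    have hx0 : 0 < x := hx.1
    have hx2 : x < 1/2 := hx.2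
    have hs : x - x^3/4 < Real.sin x := by
      have := Real.sin_gt_sub_cube hx0; nlinarith [pow_pos hx0 3]
    have hcube : x^3 < x/4 := by nlinarith [mul_lt_mul_of_pos_right hx2 hx0, mul_lt_mul_of_pos_right hx2 (mul_pos hx0 hx0)]
    have hspos : 0 < Real.sin x := by linarith
    have h2 : 2*x - (2*x)^3/4 < Real.sin (2*x) := by
      have := Real.sin_gt_sub_cube (by linarith : (0:ℝ) < 2*x); nlinarith [pow_pos hx0 3]
    have hsc : Real.sin x * Real.cos x = Real.sin (2*x) / 2 := by
      rw [Real.sin_two_mul]; ring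
    have h15 : 15*x/16 < Real.sin x := by linarith
    have hsq : 225*x^2/256 < Real.sin x^2 := by nlinarith
    have hpow : 0 < x^3 := pow_pos hx0 3
    rw [hsc, div_le_iff₀ (by positivity)]
    nlinarith [mul_lt_mul_of_pos_left hsq hx0]
  · exact (continuous_id.tendsto 0).mono_left nhdsWithin_le_nhds

noncomputable def W (x : ℝ) : ℝ := (x - Real.sin x * Real.cos x)/(4 * Real.sin x^2)

lemma cont_W : ContinuousOn W (Icc 0 (Real.pi/2)) := by
  have hpi := Real.pi_pos
  intro x hx
  rcases eq_or_lt_of_le hx.1 with h0 | h0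
  · -- x = 0
    rw [← h0]
    rw [← continuousWithinAt_diff_self]
    have hsub : Icc (0:ℝ) (Real.pi/2) \ {0} ⊆ Ioi 0 := by
      rintro y ⟨hy1, hy2⟩
      simp only [mem_singleton_iff] at hy2
      exact lt_of_le_of_ne hy1.1 (Ne.symm hy2)
    have hW0 : W 0 = 0 := by simp [W]
    unfold ContinuousWithinAt
    rw [hW0]
    exact T2.mono_left (nhdsWithin_mono _ hsub)
  · -- x > 0
    apply ContinuousAt.continuousWithinAt
    have hsx : Real.sin x ≠ 0 :=
      (Real.sin_pos_of_pos_of_lt_pi h0 (by linarith [hx.2])).ne'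
    apply ContinuousAt.div
    · exact (continuous_id.sub (Real.continuous_sin.mul Real.continuous_cos)).continuousAt
    · exact (continuous_const.mul (Real.continuous_sin.pow 2)).continuousAt
    · positivity

lemma cont_hone : ContinuousOn hone (Icc 0 (Real.pi/2)) := by
  have h1 : ContinuousOn (fun φ => Real.sin (2*φ)/2) (Icc 0 (Real.pi/2)) :=
    ((Real.continuous_sin.comp (continuous_const.mul continuous_id)).div_const 2).continuousOn
  have h2 : ContinuousOn (fun φ => ((Real.pi - 2*φ)*Real.cos (2*φ) + Real.sin (2*φ))/2)
      (Icc 0 (Real.pi/2)) := by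
    apply Continuous.continuousOn
    apply Continuous.div_const
    apply Continuous.add
    · exact (continuous_const.sub (continuous_const.mul continuous_id)).mul
        (Real.continuous_cos.comp (continuous_const.mul continuous_id))
    · exact Real.continuous_sin.comp (continuous_const.mul continuous_id)
  exact (cont_W.add h1).add h2

lemma htwo_eq_W (φ : ℝ) : htwo φ = W (Real.pi - φ) := by
  rw [htwo, W, Real.sin_pi_sub, Real.cos_pi_sub]
  ring_nf

lemma cont_htwo : ContinuousOn htwo (Icc (Real.pi/2) Real.pi) := by
  have hpi := Real.pi_pos
  have hmap : MapsTo (fun φ => Real.pi - φ) (Icc (Real.pi/2) Real.pi) (Icc 0 (Real.pi/2)) := by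
    intro x hx
    simp only [mem_Icc] at hx ⊢
    constructor <;> linarith [hx.1, hx.2]
  have := cont_W.comp (continuous_const.sub continuous_id).continuousOn hmap
  apply this.congr
  intro x _
  exact htwo_eq_W x

noncomputable def Fone (φ : ℝ) : ℝ :=
  (if φ = 0 then (-1/4 : ℝ) else -(φ*Real.cos φ/Real.sin φ)/4)
  - Real.cos (2*φ)/4 + ((Real.pi-2*φ)*Real.sin (2*φ)/2 - Real.cos (2*φ))/2

lemma cont_Fone : ContinuousOn Fone (Icc 0 (Real.pi/2)) := by
  have hpi := Real.pi_pos
  have hrest : Continuous (fun φ : ℝ =>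
      - Real.cos (2*φ)/4 + ((Real.pi-2*φ)*Real.sin (2*φ)/2 - Real.cos (2*φ))/2) := by
    apply Continuous.add
    · exact ((Real.continuous_cos.comp (continuous_const.mul continuous_id)).neg).div_const 4
    · apply Continuous.div_const
      apply Continuous.sub
      · exact ((continuous_const.sub (continuous_const.mul continuous_id)).mul
          (Real.continuous_sin.comp (continuous_const.mul continuous_id))).div_const 2
      · exact Real.continuous_cos.comp (continuous_const.mul continuous_id)
  have hFa : ContinuousOn (fun φ : ℝ => if φ = 0 then (-1/4 : ℝ) else -(φ*Real.cos φ/Real.sin φ)/4)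
      (Icc 0 (Real.pi/2)) := by
    intro x hx
    rcases eq_or_lt_of_le hx.1 with h0 | h0
    · rw [← h0, ← continuousWithinAt_diff_self]
      have hsub : Icc (0:ℝ) (Real.pi/2) \ {0} ⊆ {(0:ℝ)}ᶜ := by
        rintro y ⟨_, hy2⟩
        exact hy2
      unfold ContinuousWithinAt
      have h00 : (fun φ : ℝ => if φ = 0 then (-1/4 : ℝ) else -(φ*Real.cos φ/Real.sin φ)/4) 0
          = -1/4 := by norm_num
      rw [h00]
      have hlim : Tendsto (fun φ : ℝ => -(φ*Real.cos φ/Real.sin φ)/4)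
          (𝓝[≠] (0:ℝ)) (𝓝 (-1/4)) := by
        have := (T1.neg).div_const 4
        norm_num at this
        convert this using 2
        norm_num
      have hlim2 := hlim.mono_left (nhdsWithin_mono _ hsub)
      apply hlim2.congr'
      filter_upwards [eventually_mem_nhdsWithin] with y hy
      rw [if_neg (by simpa using hy.2)]
    · apply ContinuousAt.continuousWithinAt
      have hsx : Real.sin x ≠ 0 :=
        (Real.sin_pos_of_pos_of_lt_pi h0 (by linarith [hx.2])).ne'
      have hopen : ∀ᶠ y in 𝓝 x, y ≠ 0 := by
        have : {(0:ℝ)}ᶜ ∈ 𝓝 x := isOpen_compl_singleton.mem_nhds h0.ne'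
        exact this
      have hcf : ContinuousAt (fun φ : ℝ => -(φ*Real.cos φ/Real.sin φ)/4) x := by
        apply ContinuousAt.div_const
        apply ContinuousAt.neg
        exact ((continuous_id.mul Real.continuous_cos).continuousAt).div
          Real.continuous_sin.continuousAt hsx
      apply hcf.congr
      filter_upwards [hopen] with y hy
      rw [if_neg hy]
  apply ContinuousOn.congr (hFa.add hrest.continuousOn)
  intro y _
  rw [Fone, Pi.add_apply]
  ring

lemma int_hone : (∫ φ in (0:ℝ)..(Real.pi/2), hone φ) = 7/4 := by
  have hpi := Real.pi_pos
  have hle : (0:ℝ) ≤ Real.pi/2 := by linarith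
  have hderiv : ∀ x ∈ Ioo (0:ℝ) (Real.pi/2), HasDerivAt Fone (hone x) x := by
    intro x hx
    have hx0 : x ≠ 0 := hx.1.ne'
    have hsx : 0 < Real.sin x := Real.sin_pos_of_pos_of_lt_pi hx.1 (by linarith [hx.2])
    have heq : Fone =ᶠ[𝓝 x] (fun φ : ℝ => -(φ*Real.cos φ/Real.sin φ)/4 - Real.cos (2*φ)/4
        + ((Real.pi-2*φ)*Real.sin (2*φ)/2 - Real.cos (2*φ))/2) := by
      filter_upwards [isOpen_compl_singleton.mem_nhds hx0] with y hy
      rw [Fone, if_neg (by simpa using hy)]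
    have d2x : HasDerivAt (fun φ : ℝ => 2*φ) 2 x := by
      simpa using (hasDerivAt_id x).const_mul 2
    have dcos2 : HasDerivAt (fun φ : ℝ => Real.cos (2*φ)) (-Real.sin (2*x)*2) x :=
      (Real.hasDerivAt_cos (2*x)).comp x d2x
    have dsin2 : HasDerivAt (fun φ : ℝ => Real.sin (2*φ)) (Real.cos (2*x)*2) x :=
      (Real.hasDerivAt_sin (2*x)).comp x d2x
    have dlin : HasDerivAt (fun φ : ℝ => Real.pi - 2*φ) (-2) x := by
      simpa using ((hasDerivAt_id x).const_mul 2).const_sub Real.pi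
    have dnum : HasDerivAt (fun φ : ℝ => φ*Real.cos φ) (1*Real.cos x + x*(-Real.sin x)) x :=
      (hasDerivAt_id x).mul (Real.hasDerivAt_cos x)
    have dfrac : HasDerivAt (fun φ : ℝ => φ*Real.cos φ/Real.sin φ)
        (((1*Real.cos x + x*(-Real.sin x))*Real.sin x - (x*Real.cos x)*Real.cos x)/Real.sin x^2)
        x := dnum.div (Real.hasDerivAt_sin x) hsx.ne'
    have dall := ((dfrac.neg.div_const 4).sub (dcos2.div_const 4)).add
      ((((dlin.mul dsin2).div_const 2).sub dcos2).div_const 2)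
    have dF := dall.congr_of_eventuallyEq heq
    refine dF.congr_deriv ?_
    rw [hone]
    field_simp
    linear_combination (2*x) * Real.sin_sq_add_cos_sq x
  rw [intervalIntegral.integral_eq_sub_of_hasDerivAt_of_le hle cont_Fone hderiv
    ((cont_hone.mono (uIcc_of_le hle).subset).intervalIntegrable)]
  rw [Fone, Fone]
  rw [if_neg (ne_of_gt (by positivity)), if_pos rfl]
  have h1 : 2*(Real.pi/2) = Real.pi := by ring
  have h2 : 2*(0:ℝ) = 0 := by ring
  rw [h1, h2, Real.cos_pi_div_two, Real.sin_pi_div_two, Real.cos_pi, Real.sin_pi,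
    Real.cos_zero, Real.sin_zero]
  norm_num

noncomputable def Ftwo (φ : ℝ) : ℝ :=
  if φ = Real.pi then (1/4 : ℝ) else -((Real.pi-φ)*Real.cos φ/Real.sin φ)/4

lemma cont_Ftwo : ContinuousOn Ftwo (Icc (Real.pi/2) Real.pi) := by
  have hpi := Real.pi_pos
  intro x hx
  rcases eq_or_lt_of_le hx.2 with h0 | h0
  · rw [h0, ← continuousWithinAt_diff_self]
    unfold ContinuousWithinAt
    have h00 : Ftwo Real.pi = 1/4 := by rw [Ftwo, if_pos rfl]
    rw [h00]
    have hmap : Tendsto (fun φ : ℝ => Real.pi - φ)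
        (𝓝[Icc (Real.pi/2) Real.pi \ {Real.pi}] Real.pi) (𝓝[≠] (0:ℝ)) := by
      rw [tendsto_nhdsWithin_iff]
      constructor
      · have hco : Continuous (fun φ : ℝ => Real.pi - φ) := continuous_const.sub continuous_id
        have ht := hco.tendsto Real.pi
        rw [sub_self] at ht
        exact ht.mono_left nhdsWithin_le_nhds
      · filter_upwards [eventually_mem_nhdsWithin] with y hy
        have : y ≠ Real.pi := by simpa using hy.2
        simp only [mem_compl_iff, mem_singleton_iff]
        intro hc
        exact this (by linarith)
    have hlim := (T1.div_const 4).comp hmap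
    have : (1:ℝ)/4 = 1/4 := rfl
    apply Tendsto.congr' _ hlim
    filter_upwards [eventually_mem_nhdsWithin] with y hy
    have hyne : y ≠ Real.pi := by simpa using hy.2
    show (Real.pi - y) * Real.cos (Real.pi - y) / Real.sin (Real.pi - y) / 4 = Ftwo y
    rw [Ftwo, if_neg hyne, Real.cos_pi_sub, Real.sin_pi_sub]
    ring
  · apply ContinuousAt.continuousWithinAt
    have hsx : Real.sin x ≠ 0 :=
      (Real.sin_pos_of_pos_of_lt_pi (by linarith [hx.1]) h0).ne'
    have hopen : ∀ᶠ y in 𝓝 x, y ≠ Real.pi := by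
      exact isOpen_compl_singleton.mem_nhds h0.ne
    have hcf : ContinuousAt (fun φ : ℝ => -((Real.pi-φ)*Real.cos φ/Real.sin φ)/4) x := by
      apply ContinuousAt.div_const
      apply ContinuousAt.neg
      exact (((continuous_const.sub continuous_id).mul Real.continuous_cos).continuousAt).div
        Real.continuous_sin.continuousAt hsx
    apply hcf.congr
    filter_upwards [hopen] with y hy
    rw [Ftwo, if_neg hy]

lemma int_htwo : (∫ φ in (Real.pi/2)..Real.pi, htwo φ) = 1/4 := by
  have hpi := Real.pi_pos
  have hle : Real.pi/2 ≤ Real.pi := by linarith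
  have hderiv : ∀ x ∈ Ioo (Real.pi/2) Real.pi, HasDerivAt Ftwo (htwo x) x := by
    intro x hx
    have hx0 : x ≠ Real.pi := hx.2.ne
    have hsx : 0 < Real.sin x := Real.sin_pos_of_pos_of_lt_pi (by linarith [hx.1]) hx.2
    have heq : Ftwo =ᶠ[𝓝 x] (fun φ : ℝ => -((Real.pi-φ)*Real.cos φ/Real.sin φ)/4) := by
      filter_upwards [isOpen_compl_singleton.mem_nhds hx0] with y hy
      rw [Ftwo, if_neg (by simpa using hy)]
    have dlin : HasDerivAt (fun φ : ℝ => Real.pi - φ) (-1) x := by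
      simpa using (hasDerivAt_id x).const_sub Real.pi
    have dnum : HasDerivAt (fun φ : ℝ => (Real.pi-φ)*Real.cos φ)
        ((-1)*Real.cos x + (Real.pi-x)*(-Real.sin x)) x := dlin.mul (Real.hasDerivAt_cos x)
    have dfrac := (dnum.div (Real.hasDerivAt_sin x) hsx.ne').neg.div_const 4
    have dF := dfrac.congr_of_eventuallyEq heq
    refine dF.congr_deriv ?_
    rw [htwo]
    field_simp
    linear_combination (Real.pi - x) * Real.sin_sq_add_cos_sq x
  rw [intervalIntegral.integral_eq_sub_of_hasDerivAt_of_le hle cont_Ftwo hderiv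
    ((cont_htwo.mono (uIcc_of_le hle).subset).intervalIntegrable)]
  rw [Ftwo, Ftwo]
  rw [if_pos rfl, if_neg (by intro hc; linarith [hc ▸ hpi] : ¬ Real.pi/2 = Real.pi)]
  rw [Real.cos_pi_div_two, Real.sin_pi_div_two]
  norm_num

lemma Hsymm (φ : ℝ) :
    (∫ ψ in (-Real.pi)..Real.pi, F ψ (-φ)) = ∫ ψ in (-Real.pi)..Real.pi, F ψ φ := by
  have h1 : EqOn (fun ψ => F ψ (-φ)) (fun ψ => (fun ψ' => F ψ' φ) (-ψ))
      (uIcc (-Real.pi) Real.pi) := by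
    intro ψ _
    simp only
    rw [← F_neg (-ψ) φ, neg_neg]
  rw [intervalIntegral.integral_congr h1, intervalIntegral.integral_comp_neg fun ψ' => F ψ' φ]
  norm_num

theorem outer_eq : (∫ φ in (-Real.pi)..Real.pi, ∫ ψ in (-Real.pi)..Real.pi, F ψ φ) = 4 := by
  have hpi := Real.pi_pos
  have s1 : (∫ φ in (-Real.pi)..Real.pi, ∫ ψ in (-Real.pi)..Real.pi, F ψ φ)
      = ∫ φ in (-Real.pi)..Real.pi, htilde |φ| := by
    apply ae_congr_finite ({0, Real.pi} : Set ℝ) ((Set.finite_singleton _).insert _)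
    intro φ hφI hφs
    rw [uIoc_of_le (by linarith : -Real.pi ≤ Real.pi)] at hφI
    simp only [mem_insert_iff, mem_singleton_iff, not_or] at hφs
    obtain ⟨h0, hπ⟩ := hφs
    rcases lt_or_gt_of_ne h0 with hneg | hpos
    · have e1 : (∫ ψ in (-Real.pi)..Real.pi, F ψ φ) = ∫ ψ in (-Real.pi)..Real.pi, F ψ (-φ) := by
        have := Hsymm (-φ)
        rw [neg_neg] at this
        exact this
      rw [e1, middle_eq (-φ) (by linarith) (by linarith [hφI.1]), abs_of_neg hneg]
    · rw [middle_eq φ hpos (lt_of_le_of_ne hφI.2 hπ), abs_of_pos hpos]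
  rw [s1]
  set E : ℝ → ℝ := fun φ => htilde |φ| with hE
  have iH1 : IntervalIntegrable htilde volume 0 (Real.pi/2) := by
    apply ii_congr (g := hone)
    · intro x hx
      rw [uIoc_of_le (by linarith : (0:ℝ) ≤ Real.pi/2)] at hx
      rw [htilde, if_pos hx.2]
    · exact (cont_hone.mono (uIcc_of_le (by linarith : (0:ℝ) ≤ Real.pi/2)).subset).intervalIntegrable
  have iH2 : IntervalIntegrable htilde volume (Real.pi/2) Real.pi := by
    apply ii_congr (g := htwo)
    · intro x hx
      rw [uIoc_of_le (by linarith : Real.pi/2 ≤ Real.pi)] at hx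
      rw [htilde, if_neg (not_le.mpr hx.1)]
    · exact (cont_htwo.mono (uIcc_of_le (by linarith : Real.pi/2 ≤ Real.pi)).subset).intervalIntegrable
  have iH := iH1.trans iH2
  have iE2 : IntervalIntegrable E volume 0 Real.pi := by
    apply ii_congr (g := htilde) _ iH
    intro x hx
    rw [uIoc_of_le (by linarith : (0:ℝ) ≤ Real.pi)] at hx
    rw [hE]
    simp only
    rw [abs_of_pos hx.1]
  have iE1 : IntervalIntegrable E volume (-Real.pi) 0 := by
    have h := (iE2.comp_sub_left 0).symm
    norm_num at h
    apply ii_congr (g := fun x => E (-x)) _ h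
    intro x _
    rw [hE]
    simp only [abs_neg]
  have s2 : (∫ φ in (-Real.pi)..Real.pi, E φ)
      = (∫ φ in (-Real.pi)..(0:ℝ), E φ) + ∫ φ in (0:ℝ)..Real.pi, E φ :=
    (intervalIntegral.integral_add_adjacent_intervals iE1 iE2).symm
  have s3 : (∫ φ in (-Real.pi)..(0:ℝ), E φ) = ∫ φ in (0:ℝ)..Real.pi, E φ := by
    have h := intervalIntegral.integral_comp_neg E (a := 0) (b := Real.pi)
    rw [neg_zero] at h
    rw [← h]
    apply intervalIntegral.integral_congr
    intro x _
    rw [hE]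
    simp only [abs_neg]
  have s4 : (∫ φ in (0:ℝ)..Real.pi, E φ) = ∫ φ in (0:ℝ)..Real.pi, htilde φ := by
    apply intervalIntegral.integral_congr
    intro x hx
    rw [uIcc_of_le (by linarith : (0:ℝ) ≤ Real.pi)] at hx
    rw [hE]
    simp only
    rw [abs_of_nonneg hx.1]
  have s5 : (∫ φ in (0:ℝ)..Real.pi, htilde φ) = 2 := by
    rw [← intervalIntegral.integral_add_adjacent_intervals iH1 iH2]
    have v1 : (∫ φ in (0:ℝ)..(Real.pi/2), htilde φ) = 7/4 := by
      rw [← int_hone]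
      apply intervalIntegral.integral_congr
      intro x hx
      rw [uIcc_of_le (by linarith : (0:ℝ) ≤ Real.pi/2)] at hx
      rw [htilde, if_pos hx.2]
    have v2 : (∫ φ in (Real.pi/2)..Real.pi, htilde φ) = 1/4 := by
      rw [← int_htwo]
      apply ae_congr_finite (∅ : Set ℝ) finite_empty
      intro x hx _
      rw [uIoc_of_le (by linarith : Real.pi/2 ≤ Real.pi)] at hx
      rw [htilde, if_neg (not_le.mpr hx.1)]
    rw [v1, v2]
    norm_num
  rw [s2, s3, s4, s5]
  norm_num

end Aux

theorem triple_integral_eq_four :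
    (∫ φ in (-Real.pi)..Real.pi, ∫ ψ in (-Real.pi)..Real.pi, ∫ r in (0:ℝ)..2,
      I r ψ φ * r) = 4 := by
  show (∫ φ in (-Real.pi)..Real.pi, ∫ ψ in (-Real.pi)..Real.pi, F ψ φ) = 4
  exact outer_eq
end

section
/- For 0 < ψ < π/2, the integral ∫_ψ^{π-ψ} sin²(φ+ψ)·csc²(φ) dφ equals (π − 2ψ)·cos(2ψ) + sin(2ψ). -/
open Real intervalIntegral

theorem inner_integral (ψ : ℝ) (hψ₀ : 0 < ψ) (hψ₁ : ψ < Real.pi / 2) :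
    (∫ φ in ψ..(Real.pi - ψ), Real.sin (φ + ψ) ^ 2 * (1 / Real.sin φ) ^ 2)
      = (Real.pi - 2 * ψ) * Real.cos (2 * ψ) + Real.sin (2 * ψ) := by
  have hπ := Real.pi_pos
  have hle : ψ ≤ Real.pi - ψ := by linarith
  have hsin : ∀ φ ∈ Set.uIcc ψ (Real.pi - ψ), 0 < Real.sin φ := by
    intro φ hφ
    rw [Set.uIcc_of_le hle] at hφ
    exact Real.sin_pos_of_pos_of_lt_pi (by linarith [hφ.1]) (by linarith [hφ.2])
  set F : ℝ → ℝ := fun φ => Real.cos (2*ψ) * φ + Real.sin (2*ψ) * Real.log (Real.sin φ)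
      - Real.sin ψ ^ 2 * (Real.cos φ / Real.sin φ) with hF
  have hderiv : ∀ φ ∈ Set.uIcc ψ (Real.pi - ψ),
      HasDerivAt F (Real.sin (φ + ψ) ^ 2 * (1 / Real.sin φ) ^ 2) φ := by
    intro φ hφ
    have hs := hsin φ hφ
    have hs' : Real.sin φ ≠ 0 := ne_of_gt hs
    have h1 : HasDerivAt (fun φ : ℝ => Real.cos (2*ψ) * φ) (Real.cos (2*ψ)) φ := by
      simpa using (hasDerivAt_id φ).const_mul (Real.cos (2*ψ))
    have h2 : HasDerivAt (fun φ => Real.log (Real.sin φ)) (Real.cos φ / Real.sin φ) φ :=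
      (Real.hasDerivAt_sin φ).log hs'
    have h3 : HasDerivAt (fun φ => Real.cos φ / Real.sin φ) (-(1 / Real.sin φ ^ 2)) φ := by
      have h := (Real.hasDerivAt_cos φ).div (Real.hasDerivAt_sin φ) hs'
      refine h.congr_deriv ?_
      have := Real.sin_sq_add_cos_sq φ
      field_simp
      linarith
    have h := (h1.add (h2.const_mul (Real.sin (2*ψ)))).sub (h3.const_mul (Real.sin ψ ^ 2))
    refine h.congr_deriv ?_
    rw [Real.sin_add, Real.cos_two_mul', Real.sin_two_mul]
    have hc : Real.cos φ ^ 2 = 1 - Real.sin φ ^ 2 := Real.cos_sq' φ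
    field_simp
    linear_combination (-Real.sin ψ ^ 2) * hc
  have hcont : IntervalIntegrable (fun φ => Real.sin (φ + ψ) ^ 2 * (1 / Real.sin φ) ^ 2)
      MeasureTheory.volume ψ (Real.pi - ψ) := by
    apply ContinuousOn.intervalIntegrable
    apply ContinuousOn.mul
    · exact (Continuous.continuousOn (by continuity))
    · apply ContinuousOn.pow
      apply ContinuousOn.div continuousOn_const Real.continuousOn_sin
      intro φ hφ
      exact ne_of_gt (hsin φ hφ)
  rw [intervalIntegral.integral_eq_sub_of_hasDerivAt hderiv hcont]
  have hsψ : Real.sin ψ ≠ 0 := ne_of_gt (Real.sin_pos_of_pos_of_lt_pi hψ₀ (by linarith))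
  simp only [hF, Real.sin_pi_sub, Real.cos_pi_sub]
  rw [Real.sin_two_mul]
  field_simp
  ring
end

section
/- The double integral 2·∫_0^{π/2} ∫_ψ^{π-ψ} sin²(φ+ψ)·csc²(φ) dφ dψ equals 4. -/
open Real intervalIntegral

lemma inner_eq_s5 (ψ : ℝ) (h1 : 0 < ψ) (h2 : ψ ≤ Real.pi / 2) :
    (∫ φ in ψ..(Real.pi - ψ), Real.sin (φ + ψ) ^ 2 * (1 / Real.sin φ) ^ 2)
      = (Real.pi - 2*ψ) * Real.cos (2*ψ) + Real.sin (2*ψ) := by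
  rcases eq_or_lt_of_le h2 with heq | hlt
  · have h : Real.pi - ψ = ψ := by rw [heq]; ring
    have h2ψ : 2*ψ = Real.pi := by rw [heq]; ring
    rw [h, intervalIntegral.integral_same, h2ψ, Real.sin_pi]
    ring
  · have hle : ψ ≤ Real.pi - ψ := by linarith
    have hsin : ∀ φ ∈ Set.uIcc ψ (Real.pi - ψ), Real.sin φ ≠ 0 := by
      intro φ hφ
      rw [Set.uIcc_of_le hle] at hφ
      have : 0 < Real.sin φ := Real.sin_pos_of_pos_of_lt_pi (by linarith [hφ.1]) (by linarith [hφ.2])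
      exact ne_of_gt this
    set H : ℝ → ℝ := fun φ => Real.cos ψ ^ 2 * φ + Real.sin (2*ψ) * Real.log (Real.sin φ)
        + Real.sin ψ ^ 2 * (-(Real.cos φ / Real.sin φ) - φ) with hH
    have hderiv : ∀ φ ∈ Set.uIcc ψ (Real.pi - ψ),
        HasDerivAt H (Real.sin (φ + ψ) ^ 2 * (1 / Real.sin φ) ^ 2) φ := by
      intro φ hφ
      have hs := hsin φ hφ
      have d1 : HasDerivAt (fun φ => Real.cos ψ ^ 2 * φ) (Real.cos ψ ^ 2) φ := by
        simpa using (hasDerivAt_id φ).const_mul (Real.cos ψ ^ 2)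
      have dsin : HasDerivAt Real.sin (Real.cos φ) φ := Real.hasDerivAt_sin φ
      have dcos : HasDerivAt Real.cos (-Real.sin φ) φ := Real.hasDerivAt_cos φ
      have d2 : HasDerivAt (fun φ => Real.log (Real.sin φ)) (Real.cos φ / Real.sin φ) φ := by
        have := (Real.hasDerivAt_log hs).comp φ dsin
        simpa [div_eq_mul_inv, mul_comm, Function.comp_def] using this
      have d3 : HasDerivAt (fun φ => Real.cos φ / Real.sin φ)
          ((-Real.sin φ * Real.sin φ - Real.cos φ * Real.cos φ) / Real.sin φ ^ 2) φ :=
        dcos.div dsin hs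
      have d4 : HasDerivAt (fun φ => -(Real.cos φ / Real.sin φ) - φ)
          (-((-Real.sin φ * Real.sin φ - Real.cos φ * Real.cos φ) / Real.sin φ ^ 2) - 1) φ :=
        d3.neg.sub (hasDerivAt_id φ)
      have := (d1.add (d2.const_mul (Real.sin (2*ψ)))).add (d4.const_mul (Real.sin ψ ^ 2))
      refine this.congr_deriv ?_
      symm
      rw [Real.sin_add, Real.sin_two_mul]
      have hpy := Real.sin_sq_add_cos_sq φ
      field_simp
      ring_nf

    have hint : IntervalIntegrable (fun φ => Real.sin (φ + ψ) ^ 2 * (1 / Real.sin φ) ^ 2)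
        MeasureTheory.volume ψ (Real.pi - ψ) := by
      apply ContinuousOn.intervalIntegrable
      apply ContinuousOn.mul
      · fun_prop
      · apply ContinuousOn.pow
        exact ContinuousOn.div continuousOn_const (Real.continuous_sin.continuousOn) hsin
    rw [intervalIntegral.integral_eq_sub_of_hasDerivAt hderiv hint]
    have hsψ : Real.sin ψ ≠ 0 :=
      ne_of_gt (Real.sin_pos_of_pos_of_lt_pi h1 (by linarith [Real.pi_gt_three]))
    simp only [hH, Real.sin_pi_sub, Real.cos_pi_sub]
    rw [Real.cos_two_mul', Real.sin_two_mul]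
    field_simp
    ring

theorem double_integral_eq_four :
    2 * (∫ ψ in (0:ℝ)..(Real.pi / 2),
      ∫ φ in ψ..(Real.pi - ψ), Real.sin (φ + ψ) ^ 2 * (1 / Real.sin φ) ^ 2) = 4 := by
  have hcongr : (∫ ψ in (0:ℝ)..(Real.pi / 2),
      ∫ φ in ψ..(Real.pi - ψ), Real.sin (φ + ψ) ^ 2 * (1 / Real.sin φ) ^ 2)
      = ∫ ψ in (0:ℝ)..(Real.pi / 2), ((Real.pi - 2*ψ) * Real.cos (2*ψ) + Real.sin (2*ψ)) := by
    apply intervalIntegral.integral_congr_ae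
    filter_upwards with ψ hψ
    rw [Set.uIoc_of_le (by positivity : (0:ℝ) ≤ Real.pi / 2)] at hψ
    exact inner_eq_s5 ψ hψ.1 hψ.2
  rw [hcongr]
  have hFTC : (∫ ψ in (0:ℝ)..(Real.pi / 2), ((Real.pi - 2*ψ) * Real.cos (2*ψ) + Real.sin (2*ψ)))
      = ((Real.pi - 2*(Real.pi/2)) * Real.sin (2*(Real.pi/2)) / 2 - Real.cos (2*(Real.pi/2)))
        - ((Real.pi - 2*0) * Real.sin (2*0) / 2 - Real.cos (2*0)) := by
    apply intervalIntegral.integral_eq_sub_of_hasDerivAt (f := fun ψ : ℝ => (Real.pi - 2*ψ) * Real.sin (2*ψ) / 2 - Real.cos (2*ψ))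
    · intro ψ _
      have d1 : HasDerivAt (fun ψ : ℝ => (Real.pi - 2*ψ) * Real.sin (2*ψ) / 2)
          (((-2) * Real.sin (2*ψ) + (Real.pi - 2*ψ) * (Real.cos (2*ψ) * 2)) / 2) ψ := by
        have ha : HasDerivAt (fun ψ : ℝ => Real.pi - 2*ψ) (-2) ψ := by
          simpa [Pi.sub_def] using (hasDerivAt_const ψ Real.pi).sub ((hasDerivAt_id ψ).const_mul 2)
        have hb : HasDerivAt (fun ψ : ℝ => Real.sin (2*ψ)) (Real.cos (2*ψ) * 2) ψ := by
          have := (Real.hasDerivAt_sin (2*ψ)).comp ψ ((hasDerivAt_id ψ).const_mul 2)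
          simpa [Function.comp_def] using this
        exact (ha.mul hb).div_const 2
      have d2 : HasDerivAt (fun ψ : ℝ => Real.cos (2*ψ)) (-Real.sin (2*ψ) * 2) ψ := by
        have := (Real.hasDerivAt_cos (2*ψ)).comp ψ ((hasDerivAt_id ψ).const_mul 2)
        simpa [Function.comp_def] using this
      have := d1.sub d2
      refine this.congr_deriv ?_
      symm
      ring
    · apply ContinuousOn.intervalIntegrable
      fun_prop
  rw [hFTC]
  have h1 : 2 * (Real.pi / 2) = Real.pi := by ring
  rw [h1]
  simp [Real.sin_pi, Real.cos_pi]
  ring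
end
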